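/- Let f : X → ℝ be measurable. If there exist an ergodic invertible measure-preserving transformation T and a measurable function g with f = g − g∘T a.e., then ∫_{f>0} f dμ = ∫_{f<0} (−f) dμ, where both sides may be infinite. -/

import Mathlib

open MeasureTheory Filter Topology Set

private lemma trunc_diff_le {a b M : ℝ} (hM : 0 ≤ M) :
    max (min a M) (-M) - max (min b M) (-M) ≤ max (a - b) 0 := by
  simp only [max_def, min_def]
  split_ifs <;> linarith

private lemma trunc_diff_mono {a b M N : ℝ} (hM : 0 ≤ M) (hMN : M ≤ N) :
    ENNReal.ofReal (max (min a M) (-M) - max (min b M) (-M)) ≤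
      ENNReal.ofReal (max (min a N) (-N) - max (min b N) (-N)) := by
  rcases le_total a b with h | h
  · rw [ENNReal.ofReal_eq_zero.mpr]
    · exact zero_le
    · have : max (min a M) (-M) ≤ max (min b M) (-M) :=
        max_le_max (min_le_min h le_rfl) le_rfl
      linarith
  · apply ENNReal.ofReal_le_ofReal
    simp only [max_def, min_def]
    split_ifs <;> linarith

private lemma trunc_diff_sup (a b : ℝ) :
    ⨆ n : ℕ, ENNReal.ofReal
        (max (min a (n : ℝ)) (-(n : ℝ)) - max (min b (n : ℝ)) (-(n : ℝ)))
      = ENNReal.ofReal (a - b) := by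
  apply le_antisymm
  · refine iSup_le fun n => ?_
    calc ENNReal.ofReal (max (min a (n : ℝ)) (-(n : ℝ)) - max (min b (n : ℝ)) (-(n : ℝ)))
        ≤ ENNReal.ofReal (max (a - b) 0) :=
          ENNReal.ofReal_le_ofReal (trunc_diff_le (Nat.cast_nonneg n))
      _ = ENNReal.ofReal (a - b) := by
          rcases le_total (a - b) 0 with h | h
          · rw [max_eq_right h, ENNReal.ofReal_eq_zero.mpr h, ENNReal.ofReal_zero]
          · rw [max_eq_left h]
  · set N : ℕ := ⌈|a| ⊔ |b|⌉₊ with hN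
    have ha : |a| ≤ (N : ℝ) := le_trans (le_max_left _ _) (Nat.le_ceil _)
    have hb : |b| ≤ (N : ℝ) := le_trans (le_max_right _ _) (Nat.le_ceil _)
    have hA : max (min a (N : ℝ)) (-(N : ℝ)) = a := by
      rw [min_eq_left ((le_abs_self a).trans ha), max_eq_left ((abs_le.mp ha).1)]
    have hB : max (min b (N : ℝ)) (-(N : ℝ)) = b := by
      rw [min_eq_left ((le_abs_self b).trans hb), max_eq_left ((abs_le.mp hb).1)]
    exact le_iSup_of_le N (by rw [hA, hB])

theorem stmt6 {X : Type*} [MeasurableSpace X] [StandardBorelSpace X]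
    (μ : Measure X) [IsProbabilityMeasure μ]
    (f : X → ℝ) (hf : Measurable f)
    (T : X → X) (hT : Ergodic T μ)
    (hTinv : ∃ S : X → X, Measurable S ∧ MeasurePreserving S μ μ ∧
      Function.LeftInverse S T ∧ Function.RightInverse S T)
    (g : X → ℝ) (hg : Measurable g)
    (hcob : ∀ᵐ x ∂μ, f x = g x - g (T x)) :
    ∫⁻ x in {x | 0 < f x}, ENNReal.ofReal (f x) ∂μ =
      ∫⁻ x in {x | f x < 0}, ENNReal.ofReal (-f x) ∂μ := by
  have hTm : Measurable T := hT.toMeasurePreserving.measurable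
  have hmap : Measure.map T μ = μ := hT.toMeasurePreserving.map_eq
  -- Reduce set lintegrals to full-space lintegrals
  have L1 : ∫⁻ x in {x | 0 < f x}, ENNReal.ofReal (f x) ∂μ
      = ∫⁻ x, ENNReal.ofReal (f x) ∂μ := by
    rw [← lintegral_indicator (measurableSet_lt measurable_const hf)]
    refine lintegral_congr fun x => ?_
    by_cases hx : 0 < f x
    · simp [Set.indicator, hx]
    · simp [Set.indicator, hx, ENNReal.ofReal_eq_zero.mpr (le_of_not_gt hx)]
  have L2 : ∫⁻ x in {x | f x < 0}, ENNReal.ofReal (-f x) ∂μ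
      = ∫⁻ x, ENNReal.ofReal (-f x) ∂μ := by
    rw [← lintegral_indicator (measurableSet_lt hf measurable_const)]
    refine lintegral_congr fun x => ?_
    by_cases hx : f x < 0
    · simp [Set.indicator, hx]
    · simp [Set.indicator, hx,
        ENNReal.ofReal_eq_zero.mpr (by linarith [le_of_not_gt hx] : -f x ≤ 0)]
  -- Replace f by the coboundary
  have hcong1 : ∫⁻ x, ENNReal.ofReal (f x) ∂μ
      = ∫⁻ x, ENNReal.ofReal (g x - g (T x)) ∂μ :=
    lintegral_congr_ae (hcob.mono fun x hx => by dsimp only; rw [hx])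
  have hcong2 : ∫⁻ x, ENNReal.ofReal (-f x) ∂μ
      = ∫⁻ x, ENNReal.ofReal (g (T x) - g x) ∂μ :=
    lintegral_congr_ae (hcob.mono fun x hx => by dsimp only; rw [hx, neg_sub])
  -- Monotone convergence for truncations
  have MCT : ∀ u v : X → ℝ, Measurable u → Measurable v →
      ∫⁻ x, ENNReal.ofReal (u x - v x) ∂μ
        = ⨆ n : ℕ, ∫⁻ x, ENNReal.ofReal
            (max (min (u x) (n : ℝ)) (-(n : ℝ)) - max (min (v x) (n : ℝ)) (-(n : ℝ))) ∂μ := by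
    intro u v hu hv
    rw [← lintegral_iSup (f := fun (n : ℕ) x => ENNReal.ofReal
          (max (min (u x) (n : ℝ)) (-(n : ℝ)) - max (min (v x) (n : ℝ)) (-(n : ℝ))))
        (fun n => (((hu.min measurable_const).max measurable_const).sub
          ((hv.min measurable_const).max measurable_const)).ennreal_ofReal)
        (fun m n hmn x => trunc_diff_mono (Nat.cast_nonneg m) (Nat.cast_le.mpr hmn))]
    exact lintegral_congr fun x => (trunc_diff_sup (u x) (v x)).symm
  -- Per-level equality of positive and negative parts
  have EQ : ∀ n : ℕ,
      ∫⁻ x, ENNReal.ofReal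
          (max (min (g x) (n : ℝ)) (-(n : ℝ)) - max (min (g (T x)) (n : ℝ)) (-(n : ℝ))) ∂μ
        = ∫⁻ x, ENNReal.ofReal
          (max (min (g (T x)) (n : ℝ)) (-(n : ℝ)) - max (min (g x) (n : ℝ)) (-(n : ℝ))) ∂μ := by
    intro n
    set G : X → ℝ := fun x => max (min (g x) (n : ℝ)) (-(n : ℝ)) with hGdef
    have hGm : Measurable G := (hg.min measurable_const).max measurable_const
    have hGb : ∀ x : X, ‖G x‖ ≤ (n : ℝ) := by
      intro x
      rw [Real.norm_eq_abs, abs_le]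
      refine ⟨le_max_right _ _, max_le ((min_le_right _ _)) (neg_le_self (Nat.cast_nonneg n))⟩
    have hGi : Integrable G μ :=
      ⟨hGm.aestronglyMeasurable, HasFiniteIntegral.of_bounded (ae_of_all μ hGb)⟩
    have hGTi : Integrable (fun x => G (T x)) μ :=
      ⟨(hGm.comp hTm).aestronglyMeasurable,
        HasFiniteIntegral.of_bounded (ae_of_all μ fun x => hGb (T x))⟩
    have hint : ∫ x, G (T x) ∂μ = ∫ x, G x ∂μ := by
      conv_rhs => rw [← hmap]
      exact (integral_map hTm.aemeasurable (by rw [hmap]; exact hGm.aestronglyMeasurable)).symm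
    set D : X → ℝ := fun x => G x - G (T x) with hDdef
    have hDi : Integrable D μ := hGi.sub hGTi
    have hzero : ∫ x, D x ∂μ = 0 := by
      rw [hDdef]
      simp only
      rw [integral_sub hGi hGTi, hint, sub_self]
    have hpos : Integrable (fun x => max (D x) 0) μ := hDi.pos_part
    have hneg : Integrable (fun x => max (-D x) 0) μ := hDi.neg.pos_part
    have hsplit : ∫ x, max (D x) 0 ∂μ = ∫ x, max (-D x) 0 ∂μ := by
      have : ∫ x, (max (D x) 0 - max (-D x) 0) ∂μ = 0 := by
        have hfun : (fun x => max (D x) 0 - max (-D x) 0) = D :=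
          funext fun x => max_zero_sub_eq_self (D x)
        rw [hfun, hzero]
      rw [integral_sub hpos hneg] at this
      linarith
    have ofReal_max : ∀ t : ℝ, ENNReal.ofReal (max t 0) = ENNReal.ofReal t := by
      intro t
      rcases le_total t 0 with h | h
      · rw [max_eq_right h, ENNReal.ofReal_zero, eq_comm, ENNReal.ofReal_eq_zero.mpr h]
      · rw [max_eq_left h]
    calc ∫⁻ x, ENNReal.ofReal (D x) ∂μ
        = ∫⁻ x, ENNReal.ofReal (max (D x) 0) ∂μ :=
          lintegral_congr fun x => (ofReal_max (D x)).symm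
      _ = ENNReal.ofReal (∫ x, max (D x) 0 ∂μ) :=
          (ofReal_integral_eq_lintegral_ofReal hpos
            (ae_of_all μ fun x => le_max_right _ _)).symm
      _ = ENNReal.ofReal (∫ x, max (-D x) 0 ∂μ) := by rw [hsplit]
      _ = ∫⁻ x, ENNReal.ofReal (max (-D x) 0) ∂μ :=
          ofReal_integral_eq_lintegral_ofReal hneg
            (ae_of_all μ fun x => le_max_right _ _)
      _ = ∫⁻ x, ENNReal.ofReal (-D x) ∂μ :=
          lintegral_congr fun x => ofReal_max (-D x)
      _ = _ := lintegral_congr fun x => by rw [hDdef]; simp only [neg_sub, hGdef]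
  rw [L1, L2, hcong1, hcong2, MCT g (fun x => g (T x)) hg (hg.comp hTm),
    MCT (fun x => g (T x)) g (hg.comp hTm) hg]
  exact iSup_congr EQ
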